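/- Suppose (X, B) is a t-uniform set system with |X| = k such that for any r blocks B₁,...,B_r ∈ B one has |B₁ ∪ ... ∪ B_r| < k, and rt ≥ k. Then |B| ≤ C(k-1, t). -/

import Mathlib

open Finset

private def frankl_arc (k t : ℕ) {X : Type} [DecidableEq X] (σ : ZMod k ≃ X) (a : ZMod k) :
    Finset X := (Finset.range t).image (fun i : ℕ => σ (a + (i : ZMod k)))

private lemma frankl_core (n c q e : ℕ) (hc : 0 < c) (hcn : c < n)
    (hn : n + e = (q + 1) * c) (he : e < c)
    (A : Finset (ZMod n)) (hA : n < A.card + c) :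
    ∃ p : Fin (q + 1) → ZMod n, (∀ j, p j ∈ A) ∧
      ∀ y : ZMod n, ∃ j : Fin (q + 1), ∃ i : ℕ, i < c ∧ y = p j + (i : ZMod n) := by
  classical
  haveI : NeZero n := ⟨by omega⟩
  have hcardu : (univ : Finset (ZMod n)).card = n := by
    rw [Finset.card_univ, ZMod.card]
  have hAc : (univ \ A).card + A.card = n := by
    rw [Finset.card_sdiff_add_card_eq_card (Finset.subset_univ A), hcardu]
  have hAclt : (univ \ A).card < c := by omega
  have hApos : 0 < A.card := by omega
  set Good := univ.filter (fun x : ZMod n =>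
    (∀ j < q, x + ((j * c : ℕ) : ZMod n) ∈ A) ∧
      ∃ δ ≤ e, x + ((q * c : ℕ) : ZMod n) - ((δ : ℕ) : ZMod n) ∈ A) with hGoodDef
  have hGood : Good.Nonempty := by
    by_contra hg
    rw [Finset.not_nonempty_iff_eq_empty] at hg
    set Bad₁ := univ.filter (fun x : ZMod n => ∃ j < q, x + ((j * c : ℕ) : ZMod n) ∉ A) with hB1
    set Y := univ.filter (fun y : ZMod n => ∀ δ ≤ e, y - ((δ : ℕ) : ZMod n) ∉ A) with hY
    set Bad₂ := Y.image (fun y : ZMod n => y - ((q * c : ℕ) : ZMod n)) with hB2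
    have hcover : (univ : Finset (ZMod n)) ⊆ Bad₁ ∪ Bad₂ := by
      intro x _
      by_contra hx
      rw [Finset.mem_union, not_or] at hx
      obtain ⟨hx1, hx2⟩ := hx
      have h1 : ∀ j < q, x + ((j * c : ℕ) : ZMod n) ∈ A := by
        intro j hj
        by_contra hja
        exact hx1 (Finset.mem_filter.mpr ⟨Finset.mem_univ x, ⟨j, hj, hja⟩⟩)
      have h2 : ∃ δ ≤ e, x + ((q * c : ℕ) : ZMod n) - ((δ : ℕ) : ZMod n) ∈ A := by
        by_contra hd
        push_neg at hd
        have hxy : x + ((q * c : ℕ) : ZMod n) ∈ Y :=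
          Finset.mem_filter.mpr ⟨Finset.mem_univ _, fun δ hδ => hd δ hδ⟩
        exact hx2 (Finset.mem_image.mpr ⟨_, hxy, by abel⟩)
      have : x ∈ Good := Finset.mem_filter.mpr ⟨Finset.mem_univ x, h1, h2⟩
      rw [hg] at this
      exact absurd this (Finset.notMem_empty x)
    have hBad1 : Bad₁.card ≤ q * (univ \ A).card := by
      have hsub : Bad₁ ⊆ (Finset.range q).biUnion
          (fun j => (univ \ A).image (fun z => z - ((j * c : ℕ) : ZMod n))) := by
        intro x hx
        obtain ⟨-, j, hj, hja⟩ := Finset.mem_filter.mp hx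
        refine Finset.mem_biUnion.mpr ⟨j, Finset.mem_range.mpr hj, Finset.mem_image.mpr
          ⟨x + ((j * c : ℕ) : ZMod n), ?_, by abel⟩⟩
        exact Finset.mem_sdiff.mpr ⟨Finset.mem_univ _, hja⟩
      calc Bad₁.card ≤ _ := Finset.card_le_card hsub
        _ ≤ ∑ j ∈ Finset.range q, ((univ \ A).image
              (fun z => z - ((j * c : ℕ) : ZMod n))).card := Finset.card_biUnion_le
        _ ≤ ∑ _j ∈ Finset.range q, (univ \ A).card := by
            exact Finset.sum_le_sum (fun j _ => Finset.card_image_le)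
        _ = q * (univ \ A).card := by rw [Finset.sum_const, Finset.card_range, smul_eq_mul]
    have hBad2 : Bad₂.card = Y.card :=
      Finset.card_image_of_injective _ sub_left_injective
    have hYcard : Y.card + e < c := by
      rcases Y.eq_empty_or_nonempty with hYe | ⟨y₀, hy₀⟩
      · rw [hYe]; simpa using he
      · have hy₀P := (Finset.mem_filter.mp hy₀).2
        have hy₀A : y₀ ∉ A := by simpa using hy₀P 0 (Nat.zero_le e)
        obtain ⟨a, ha⟩ := Finset.card_pos.mp hApos
        have hane : y₀ - a ≠ 0 := sub_ne_zero.mpr (by rintro rfl; exact hy₀A ha)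
        have hexw : y₀ - (((((y₀ - a).val - 1) + 1 : ℕ)) : ZMod n) ∈ A := by
          have hvpos : 0 < (y₀ - a).val := ZMod.val_pos.mpr hane
          rw [Nat.sub_add_cancel hvpos, ZMod.natCast_rightInverse (y₀ - a), sub_sub_cancel]
          exact ha
        have hex : ∃ j : ℕ, y₀ - (((j + 1 : ℕ)) : ZMod n) ∈ A := ⟨_, hexw⟩
        set d := Nat.find hex with hdDef
        have hd : y₀ - (((d + 1 : ℕ)) : ZMod n) ∈ A := Nat.find_spec hex
        have hmin : ∀ j < d, y₀ - (((j + 1 : ℕ)) : ZMod n) ∉ A := fun j hj => Nat.find_min hex hj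
        have hed : e ≤ d := by
          by_contra hh
          push_neg at hh
          exact hy₀P (d + 1) (by omega) hd
        have hdn : d < n - 1 := by
          have h1 : d ≤ (y₀ - a).val - 1 := Nat.find_min' hex hexw
          have h2 := ZMod.val_lt (y₀ - a)
          have h3 : 0 < (y₀ - a).val := ZMod.val_pos.mpr hane
          omega
        set E := (Finset.range e).image (fun i : ℕ => y₀ - (((d - i : ℕ)) : ZMod n)) with hE
        have hEcard : E.card = e := by
          rw [Finset.card_image_of_injOn, Finset.card_range]
          intro i hi i' hi' hii
          rw [Finset.mem_coe, Finset.mem_range] at hi hi'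
          have : (((d - i : ℕ)) : ZMod n) = (((d - i' : ℕ)) : ZMod n) := by
            have := sub_right_injective hii
            exact this
          have hv := congrArg ZMod.val this
          rw [ZMod.val_cast_of_lt (by omega), ZMod.val_cast_of_lt (by omega)] at hv
          omega
        have hEA : ∀ z ∈ E, z ∉ A := by
          intro z hz
          obtain ⟨i, hi, rfl⟩ := Finset.mem_image.mp hz
          rw [Finset.mem_range] at hi
          have h1 : (d - i : ℕ) = (d - i - 1) + 1 := by omega
          rw [h1]
          exact hmin (d - i - 1) (by omega)
        have hEY : ∀ z ∈ E, z ∉ Y := by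
          intro z hz hzY
          obtain ⟨i, hi, rfl⟩ := Finset.mem_image.mp hz
          rw [Finset.mem_range] at hi
          have hzP := (Finset.mem_filter.mp hzY).2
          have := hzP (i + 1) (by omega)
          rw [sub_sub, ← Nat.cast_add] at this
          have hnum : (d - i) + (i + 1) = d + 1 := by omega
          rw [hnum] at this
          exact this hd
        have hYE : Disjoint Y E := by
          rw [Finset.disjoint_right]
          intro z hz
          exact hEY z hz
        have hsub : Y ∪ E ⊆ univ \ A := by
          intro z hz
          rcases Finset.mem_union.mp hz with hz | hz
          · have := (Finset.mem_filter.mp hz).2 0 (Nat.zero_le e)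
            simp only [Nat.cast_zero, sub_zero] at this
            exact Finset.mem_sdiff.mpr ⟨Finset.mem_univ _, this⟩
          · exact Finset.mem_sdiff.mpr ⟨Finset.mem_univ _, hEA z hz⟩
        have := Finset.card_le_card hsub
        rw [Finset.card_union_of_disjoint hYE, hEcard] at this
        omega
    have hle : n ≤ Bad₁.card + Bad₂.card := by
      calc n = (univ : Finset (ZMod n)).card := hcardu.symm
        _ ≤ (Bad₁ ∪ Bad₂).card := Finset.card_le_card hcover
        _ ≤ Bad₁.card + Bad₂.card := Finset.card_union_le _ _
    have hq1 : q * (univ \ A).card ≤ q * (c - 1) := Nat.mul_le_mul_left q (by omega)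
    have hq2 : q * (c - 1) + q * 1 = q * c := by rw [← Nat.mul_add]; congr 1; omega
    have hq3 : (q + 1) * c = q * c + c := by ring
    omega
  obtain ⟨x, hx⟩ := hGood
  obtain ⟨-, hx1, δ₀, hδ₀e, hδ₀A⟩ := Finset.mem_filter.mp hx
  have hq3 : (q + 1) * c = q * c + c := by ring
  refine ⟨fun j => if h : (j : ℕ) < q then x + (((j : ℕ) * c : ℕ) : ZMod n)
    else x + ((q * c : ℕ) : ZMod n) - ((δ₀ : ℕ) : ZMod n), ?_, ?_⟩
  · intro j
    dsimp only
    by_cases h : (j : ℕ) < q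
    · rw [dif_pos h]; exact hx1 _ h
    · rw [dif_neg h]; exact hδ₀A
  · intro y
    set m := (y - x).val with hm
    have hmlt : m < n := ZMod.val_lt _
    have hy : y = x + ((m : ℕ) : ZMod n) := by
      rw [hm, ZMod.natCast_rightInverse (y - x)]; abel
    by_cases hmq : m < q * c
    · have hjq : m / c < q := (Nat.div_lt_iff_lt_mul hc).mpr hmq
      refine ⟨⟨m / c, by omega⟩, m % c, Nat.mod_lt _ hc, ?_⟩
      dsimp only
      rw [dif_pos (show m / c < q from hjq)]
      rw [hy, add_assoc, ← Nat.cast_add]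
      congr 2
      rw [mul_comm]
      exact (Nat.div_add_mod m c).symm
    · push_neg at hmq
      refine ⟨⟨q, by omega⟩, δ₀ + (m - q * c), by omega, ?_⟩
      dsimp only
      rw [dif_neg (show ¬ q < q by omega)]
      rw [hy, Nat.cast_add]
      calc x + ((m : ℕ) : ZMod n)
          = x + (((q * c : ℕ) : ZMod n) + ((m - q * c : ℕ) : ZMod n)) := by
            rw [← Nat.cast_add]; congr 2; omega
        _ = x + ((q * c : ℕ) : ZMod n) - ((δ₀ : ℕ) : ZMod n)
              + (((δ₀ : ℕ) : ZMod n) + ((m - q * c : ℕ) : ZMod n)) := by ring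

private lemma frankl_perSigma (k t r : ℕ) [NeZero k] (ht : 0 < t) (htk : t < k) (hrt : k ≤ r * t)
    {X : Type} [Fintype X] [DecidableEq X] (hk : Fintype.card X = k)
    (B : Finset (Finset X))
    (hunion : ∀ f : Fin r → Finset X, (∀ i, f i ∈ B) → (Finset.univ.sup f).card < k)
    (σ : ZMod k ≃ X) :
    (univ.filter (fun a : ZMod k => frankl_arc k t σ a ∈ B)).card ≤ k - t := by
  classical
  set A := univ.filter (fun a : ZMod k => frankl_arc k t σ a ∈ B) with hA
  by_contra h
  push_neg at h
  have hAcard : k < A.card + t := by omega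
  set q := (k - 1) / t with hq
  have hdm : q * t + (k - 1) % t = k - 1 := by rw [hq, mul_comm]; exact Nat.div_add_mod _ _
  have hmlt : (k - 1) % t < t := Nat.mod_lt _ ht
  have hq4 : (q + 1) * t = q * t + t := by ring
  have hQ : q * t ≤ k - 1 := by omega
  have hQ2 : k ≤ (q + 1) * t := by omega
  have hn : k + ((q + 1) * t - k) = (q + 1) * t := by omega
  have he : (q + 1) * t - k < t := by omega
  obtain ⟨p, hpA, hpcov⟩ := frankl_core k t q ((q + 1) * t - k) ht htk hn he A hAcard
  have hqr : q + 1 ≤ r := by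
    have hqt : q * t < r * t := by omega
    have := lt_of_mul_lt_mul_right hqt (Nat.zero_le t)
    omega
  set g : Fin r → Finset X := fun i =>
    if h : (i : ℕ) < q + 1 then frankl_arc k t σ (p ⟨i, h⟩)
    else frankl_arc k t σ (p ⟨0, Nat.succ_pos q⟩) with hg
  have hgB : ∀ i, g i ∈ B := by
    intro i
    simp only [hg]
    split
    · exact (Finset.mem_filter.mp (hpA _)).2
    · exact (Finset.mem_filter.mp (hpA _)).2
  have hcard := hunion g hgB
  have hsup : Finset.univ.sup g = (Finset.univ : Finset X) := by
    apply le_antisymm (Finset.subset_univ _)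
    intro y _
    obtain ⟨j, i, hic, hji⟩ := hpcov (σ.symm y)
    have hyj : y ∈ frankl_arc k t σ (p j) := by
      rw [frankl_arc]
      refine Finset.mem_image.mpr ⟨i, Finset.mem_range.mpr hic, ?_⟩
      rw [← hji, Equiv.apply_symm_apply]
    have hjr : (j : ℕ) < r := lt_of_lt_of_le j.isLt hqr
    refine Finset.mem_sup.mpr ⟨⟨(j : ℕ), hjr⟩, Finset.mem_univ _, ?_⟩
    simp only [hg]
    rw [dif_pos (show ((j : ℕ) : ℕ) < q + 1 from j.isLt)]
    exact hyj
  rw [hsup, Finset.card_univ, hk] at hcard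
  omega

private lemma frankl_count_zero (k t : ℕ) [NeZero k] (htk : t < k)
    {X : Type} [Fintype X] [DecidableEq X] (hk : Fintype.card X = k)
    (b : Finset X) (hb : b.card = t) :
    (univ.filter (fun σ : ZMod k ≃ X => frankl_arc k t σ 0 = b)).card
      = t.factorial * (k - t).factorial := by
  classical
  set P : Finset (ZMod k) := (Finset.range t).image (fun i : ℕ => (i : ZMod k)) with hP
  have hPcard : P.card = t := by
    rw [hP, Finset.card_image_of_injOn, Finset.card_range]
    intro i hi i' hi' hii
    rw [Finset.mem_coe, Finset.mem_range] at hi hi'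
    have := congrArg ZMod.val hii
    rwa [ZMod.val_cast_of_lt (by omega), ZMod.val_cast_of_lt (by omega)] at this
  have harc : ∀ σ : ZMod k ≃ X, frankl_arc k t σ 0 = P.image σ := by
    intro σ
    rw [frankl_arc, hP, Finset.image_image]
    simp [Function.comp_def]
  have hfilter : (univ.filter (fun σ : ZMod k ≃ X => frankl_arc k t σ 0 = b))
      = (univ.filter (fun σ : ZMod k ≃ X => P.image σ = b)) := by
    apply Finset.filter_congr
    intro σ _
    rw [harc σ]
  rw [hfilter]
  rw [← Fintype.card_subtype]
  -- build the equivalence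
  have hval_pos : ∀ (fg : ({a : ZMod k // a ∈ P} ≃ {x : X // x ∈ b}) ×
      ({a : ZMod k // a ∉ P} ≃ {x : X // x ∉ b})) (a : ZMod k) (ha : a ∈ P),
      ((Equiv.sumCompl (· ∈ P)).symm.trans ((fg.1.sumCongr fg.2).trans
        (Equiv.sumCompl (· ∈ b)))) a = ↑(fg.1 ⟨a, ha⟩) := by
    intro fg a ha
    simp [Equiv.sumCompl_symm_apply_of_pos ha]
  have hval_neg : ∀ (fg : ({a : ZMod k // a ∈ P} ≃ {x : X // x ∈ b}) ×
      ({a : ZMod k // a ∉ P} ≃ {x : X // x ∉ b})) (a : ZMod k) (ha : a ∉ P),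
      ((Equiv.sumCompl (· ∈ P)).symm.trans ((fg.1.sumCongr fg.2).trans
        (Equiv.sumCompl (· ∈ b)))) a = ↑(fg.2 ⟨a, ha⟩) := by
    intro fg a ha
    simp [Equiv.sumCompl_symm_apply_of_neg ha]
  set Ψ : ({a : ZMod k // a ∈ P} ≃ {x : X // x ∈ b}) ×
      ({a : ZMod k // a ∉ P} ≃ {x : X // x ∉ b}) →
      {σ : ZMod k ≃ X // P.image σ = b} := fun fg =>
    ⟨(Equiv.sumCompl (· ∈ P)).symm.trans ((fg.1.sumCongr fg.2).trans
        (Equiv.sumCompl (· ∈ b))), by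
      apply Finset.eq_of_subset_of_card_le
      · intro x hx
        obtain ⟨a, ha, rfl⟩ := Finset.mem_image.mp hx
        rw [hval_pos fg a ha]
        exact (fg.1 ⟨a, ha⟩).2
      · rw [hb, Finset.card_image_of_injective _ (Equiv.injective _), hPcard]⟩ with hΨ
  have hbij : Function.Bijective Ψ := by
    constructor
    · intro fg fg' hh
      have hh' := congrArg (fun z => z.1) hh
      simp only [hΨ] at hh'
      ext z
      · have h1 := hval_pos fg z.1 z.2
        have h2 := hval_pos fg' z.1 z.2
        rw [hh'] at h1
        rw [h2] at h1
        exact h1.symm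
      · have h1 := hval_neg fg z.1 z.2
        have h2 := hval_neg fg' z.1 z.2
        rw [hh'] at h1
        rw [h2] at h1
        exact h1.symm
    · rintro ⟨σ, hσ⟩
      have hmem : ∀ a : ZMod k, a ∈ P → σ a ∈ b := by
        intro a ha; rw [← hσ]; exact Finset.mem_image_of_mem _ ha
      have hmem' : ∀ a : ZMod k, a ∉ P → σ a ∉ b := by
        intro a ha hab
        rw [← hσ] at hab
        obtain ⟨a', ha', haa⟩ := Finset.mem_image.mp hab
        exact ha ((σ.injective haa) ▸ ha')
      have hfb : Function.Bijective (fun a : {a : ZMod k // a ∈ P} =>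
          (⟨σ a, hmem a a.2⟩ : {x : X // x ∈ b})) := by
        constructor
        · intro a a' haa
          exact Subtype.ext (σ.injective (congrArg Subtype.val haa))
        · rintro ⟨x, hx⟩
          rw [← hσ] at hx
          obtain ⟨a, ha, rfl⟩ := Finset.mem_image.mp hx
          exact ⟨⟨a, ha⟩, rfl⟩
      have hgb : Function.Bijective (fun a : {a : ZMod k // a ∉ P} =>
          (⟨σ a, hmem' a a.2⟩ : {x : X // x ∉ b})) := by
        constructor
        · intro a a' haa
          exact Subtype.ext (σ.injective (congrArg Subtype.val haa))
        · rintro ⟨x, hx⟩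
          refine ⟨⟨σ.symm x, fun hP' => hx ?_⟩, Subtype.ext (σ.apply_symm_apply x)⟩
          have := hmem _ hP'
          rwa [σ.apply_symm_apply] at this
      refine ⟨⟨Equiv.ofBijective _ hfb, Equiv.ofBijective _ hgb⟩, ?_⟩
      apply Subtype.ext
      apply Equiv.ext
      intro a
      by_cases ha : a ∈ P
      · rw [hval_pos _ a ha]; rfl
      · rw [hval_neg _ a ha]; rfl
  have hcards := (Fintype.card_of_bijective hbij).symm
  rw [hcards]
  rw [Fintype.card_prod]
  have hc1 : Fintype.card {a : ZMod k // a ∈ P} = t := by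
    rw [Fintype.card_coe, hPcard]
  have hc2 : Fintype.card {x : X // x ∈ b} = t := by
    rw [Fintype.card_coe, hb]
  have hc3 : Fintype.card {a : ZMod k // a ∉ P} = k - t := by
    rw [Fintype.card_subtype_compl, hc1, ZMod.card]
  have hc4 : Fintype.card {x : X // x ∉ b} = k - t := by
    rw [Fintype.card_subtype_compl, hc2, hk]
  rw [Fintype.card_equiv (Fintype.equivOfCardEq (hc1.trans hc2.symm)),
      Fintype.card_equiv (Fintype.equivOfCardEq (hc3.trans hc4.symm)), hc1, hc3]

private lemma frankl_count_shift (k t : ℕ) [NeZero k]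
    {X : Type} [Fintype X] [DecidableEq X] (b : Finset X) (a : ZMod k) :
    (univ.filter (fun σ : ZMod k ≃ X => frankl_arc k t σ a = b)).card
      = (univ.filter (fun σ : ZMod k ≃ X => frankl_arc k t σ 0 = b)).card := by
  classical
  have harc : ∀ σ : ZMod k ≃ X, frankl_arc k t ((Equiv.addLeft a).trans σ) 0 = frankl_arc k t σ a := by
    intro σ
    rw [frankl_arc, frankl_arc]
    apply Finset.image_congr
    intro i _
    simp [Equiv.addLeft]
  refine Finset.card_bij' (fun σ _ => (Equiv.addLeft a).trans σ)
    (fun τ _ => (Equiv.addLeft a).symm.trans τ) ?_ ?_ ?_ ?_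
  · intro σ hσ
    rw [Finset.mem_filter] at hσ ⊢
    exact ⟨Finset.mem_univ _, by rw [harc σ]; exact hσ.2⟩
  · intro τ hτ
    rw [Finset.mem_filter] at hτ ⊢
    refine ⟨Finset.mem_univ _, ?_⟩
    have := harc ((Equiv.addLeft a).symm.trans τ)
    rw [← Equiv.trans_assoc, Equiv.self_trans_symm, Equiv.refl_trans] at this
    rw [← this]
    exact hτ.2
  · intro σ _
    show (Equiv.addLeft a).symm.trans ((Equiv.addLeft a).trans σ) = σ
    rw [← Equiv.trans_assoc, Equiv.symm_trans_self, Equiv.refl_trans]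
  · intro τ _
    show (Equiv.addLeft a).trans ((Equiv.addLeft a).symm.trans τ) = τ
    rw [← Equiv.trans_assoc, Equiv.self_trans_symm, Equiv.refl_trans]

/-- Frankl's lemma: if `(X, B)` is a `t`-uniform set system with `|X| = k` such that
any `r` blocks have union of size `< k`, and `r*t ≥ k`, then `|B| ≤ C(k-1, t)`. -/
theorem frankl_lemma {X : Type} [Fintype X] [DecidableEq X] (t r k : ℕ)
    (ht : 0 < t) (hr : 0 < r) (hk : Fintype.card X = k)
    (B : Finset (Finset X)) (huniform : ∀ b ∈ B, b.card = t)
    (hunion : ∀ f : Fin r → Finset X, (∀ i, f i ∈ B) → (Finset.univ.sup f).card < k)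
    (hrt : k ≤ r * t) :
    B.card ≤ (k - 1).choose t := by
  classical
  rcases B.eq_empty_or_nonempty with rfl | ⟨b₀, hb₀⟩
  · simp
  have htk : t < k := by
    have hcard := hunion (fun _ => b₀) (fun _ => hb₀)
    have hsup : (Finset.univ.sup fun _ : Fin r => b₀) = b₀ := by
      have h1 : (Finset.univ.sup fun _ : Fin r => b₀) ≤ b₀ := Finset.sup_le fun i _ => le_rfl
      have h2 : b₀ ≤ Finset.univ.sup fun _ : Fin r => b₀ :=
        Finset.le_sup (f := fun _ : Fin r => b₀) (Finset.mem_univ (⟨0, hr⟩ : Fin r))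
      exact le_antisymm h1 h2
    rw [hsup] at hcard
    have := huniform b₀ hb₀
    omega
  haveI : NeZero k := ⟨by omega⟩
  have key : ∀ b ∈ B,
      (∑ σ : ZMod k ≃ X, (univ.filter (fun a : ZMod k => frankl_arc k t σ a = b)).card)
        = k * (t.factorial * (k - t).factorial) := by
    intro b hb
    calc ∑ σ : ZMod k ≃ X, (univ.filter (fun a : ZMod k => frankl_arc k t σ a = b)).card
        = ∑ σ : ZMod k ≃ X, ∑ a : ZMod k, (if frankl_arc k t σ a = b then 1 else 0) := by
          exact Finset.sum_congr rfl (fun σ _ => Finset.card_filter _ _)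
      _ = ∑ a : ZMod k, ∑ σ : ZMod k ≃ X, (if frankl_arc k t σ a = b then 1 else 0) :=
          Finset.sum_comm
      _ = ∑ a : ZMod k, (univ.filter (fun σ : ZMod k ≃ X => frankl_arc k t σ a = b)).card := by
          exact Finset.sum_congr rfl (fun a _ => (Finset.card_filter _ _).symm)
      _ = ∑ _a : ZMod k, t.factorial * (k - t).factorial := by
          refine Finset.sum_congr rfl (fun a _ => ?_)
          rw [frankl_count_shift k t b a, frankl_count_zero k t htk hk b (huniform b hb)]
      _ = k * (t.factorial * (k - t).factorial) := by
          rw [Finset.sum_const, Finset.card_univ, ZMod.card, smul_eq_mul]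
  have hS_lower : ∑ σ : ZMod k ≃ X, (univ.filter (fun a : ZMod k => frankl_arc k t σ a ∈ B)).card
      = B.card * (k * (t.factorial * (k - t).factorial)) := by
    calc ∑ σ : ZMod k ≃ X, (univ.filter (fun a : ZMod k => frankl_arc k t σ a ∈ B)).card
        = ∑ σ : ZMod k ≃ X, ∑ a : ZMod k, (if frankl_arc k t σ a ∈ B then 1 else 0) := by
          exact Finset.sum_congr rfl (fun σ _ => Finset.card_filter _ _)
      _ = ∑ σ : ZMod k ≃ X, ∑ a : ZMod k, ∑ b ∈ B, (if frankl_arc k t σ a = b then 1 else 0) := by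
          refine Finset.sum_congr rfl (fun σ _ => Finset.sum_congr rfl (fun a _ => ?_))
          exact (Finset.sum_ite_eq B (frankl_arc k t σ a) (fun _ => 1)).symm
      _ = ∑ σ : ZMod k ≃ X, ∑ b ∈ B, ∑ a : ZMod k, (if frankl_arc k t σ a = b then 1 else 0) := by
          exact Finset.sum_congr rfl (fun σ _ => Finset.sum_comm)
      _ = ∑ b ∈ B, ∑ σ : ZMod k ≃ X, ∑ a : ZMod k, (if frankl_arc k t σ a = b then 1 else 0) :=
          Finset.sum_comm
      _ = ∑ b ∈ B, ∑ σ : ZMod k ≃ X, (univ.filter (fun a : ZMod k => frankl_arc k t σ a = b)).card := by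
          exact Finset.sum_congr rfl (fun b _ => Finset.sum_congr rfl
            (fun σ _ => (Finset.card_filter _ _).symm))
      _ = ∑ _b ∈ B, k * (t.factorial * (k - t).factorial) :=
          Finset.sum_congr rfl key
      _ = B.card * (k * (t.factorial * (k - t).factorial)) := by
          rw [Finset.sum_const, smul_eq_mul]
  have hS_upper : ∑ σ : ZMod k ≃ X, (univ.filter (fun a : ZMod k => frankl_arc k t σ a ∈ B)).card
      ≤ k.factorial * (k - t) := by
    have hcardE : Fintype.card (ZMod k ≃ X) = k.factorial := by
      rw [Fintype.card_equiv (Fintype.equivOfCardEq (by rw [ZMod.card, hk]))]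
      rw [ZMod.card]
    calc ∑ σ : ZMod k ≃ X, (univ.filter (fun a : ZMod k => frankl_arc k t σ a ∈ B)).card
        ≤ (univ : Finset (ZMod k ≃ X)).card • (k - t) :=
          Finset.sum_le_card_nsmul _ _ _
            (fun σ _ => frankl_perSigma k t r ht htk hrt hk B hunion σ)
      _ = k.factorial * (k - t) := by rw [Finset.card_univ, hcardE, smul_eq_mul]
  have hmain : B.card * (k * (t.factorial * (k - t).factorial)) ≤ k.factorial * (k - t) := by
    rw [← hS_lower]; exact hS_upper
  obtain ⟨k', rfl⟩ : ∃ k', k = k' + 1 := ⟨k - 1, by omega⟩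
  have ht' : t ≤ k' := by omega
  obtain ⟨u, hu⟩ : ∃ u, k' + 1 - t = u + 1 := ⟨k' - t, by omega⟩
  have hu' : k' - t = u := by omega
  rw [Nat.factorial_succ, hu, Nat.factorial_succ u] at hmain
  have hred : B.card * (t.factorial * u.factorial) ≤ k'.factorial := by
    have hpos : 0 < (k' + 1) * (u + 1) := by positivity
    refine Nat.le_of_mul_le_mul_right ?_ hpos
    calc B.card * (t.factorial * u.factorial) * ((k' + 1) * (u + 1))
        = B.card * ((k' + 1) * (t.factorial * ((u + 1) * u.factorial))) := by ring
      _ ≤ (k' + 1) * k'.factorial * (u + 1) := hmain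
      _ = k'.factorial * ((k' + 1) * (u + 1)) := by ring
  have hch := Nat.choose_mul_factorial_mul_factorial ht'
  rw [hu'] at hch
  have hgoal : B.card ≤ k'.choose t := by
    have hpos : 0 < t.factorial * u.factorial := by positivity
    refine Nat.le_of_mul_le_mul_right ?_ hpos
    calc B.card * (t.factorial * u.factorial) ≤ k'.factorial := hred
      _ = k'.choose t * (t.factorial * u.factorial) := by rw [← hch]; ring
  simpa using hgoal
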